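/- In GL_3(Z[s]/(s^2)), the product ρ(σ_2)ρ(τ_1)ρ(σ_1)ρ(τ_2)ρ(σ_2)ρ(σ_1)ρ(τ_1)ρ(σ_2)ρ(τ_2)ρ(σ_2) equals the identity matrix, where ρ(σ_1) = [[0,1,0],[1,0,0],[0,0,1]], ρ(σ_2) = [[1,0,0],[0,0,1],[0,1,0]], ρ(τ_1) = [[s,1+s,0],[1-s,-s,0],[0,0,1]], ρ(τ_2) = [[1,0,0],[0,s,1+s],[0,1-s,-s]]. -/
import Mathlib

private theorem stmt_6_aux {R : Type*} [CommRing R] (s : R) (hs : s * s = 0)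
    (S1 S2 T1 T2 : Matrix (Fin 3) (Fin 3) R)
    (hS1 : S1 = !![0,1,0; 1,0,0; 0,0,1])
    (hS2 : S2 = !![1,0,0; 0,0,1; 0,1,0])
    (hT1 : T1 = !![s, 1+s, 0; 1-s, -s, 0; 0,0,1])
    (hT2 : T2 = !![1,0,0; 0, s, 1+s; 0, 1-s, -s]) :
    S2 * T1 * S1 * T2 * S2 * S1 * T1 * S2 * T2 * S2 = 1 := by
  have hs2 : s ^ 2 = 0 := by rw [sq, hs]
  subst hS1 hS2 hT1 hT2

  have h1 : (!![1,0,0; 0,0,1; 0,1,0]) * (!![s, 1+s, 0; 1-s, -s, 0; 0,0,1]) = (!![(1)*s, ((1)+(1)*s), (0); (0), (0), (1); ((1)+(-1)*s), (-1)*s, (0)] : Matrix (Fin 3) (Fin 3) R) := by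
    ext i j <;> fin_cases i <;> fin_cases j <;> simp [Matrix.mul_apply, Fin.sum_univ_succ, Matrix.vecHead, Matrix.vecTail] <;> (try ring_nf) <;> (try simp [hs2]) <;> (try ring_nf)
  have h2 : (!![(1)*s, ((1)+(1)*s), (0); (0), (0), (1); ((1)+(-1)*s), (-1)*s, (0)]) * (!![0,1,0; 1,0,0; 0,0,1]) = (!![((1)+(1)*s), (1)*s, (0); (0), (0), (1); (-1)*s, ((1)+(-1)*s), (0)] : Matrix (Fin 3) (Fin 3) R) := by
    ext i j <;> fin_cases i <;> fin_cases j <;> simp [Matrix.mul_apply, Fin.sum_univ_succ, Matrix.vecHead, Matrix.vecTail] <;> (try ring_nf) <;> (try simp [hs2]) <;> (try ring_nf)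
  have h3 : (!![((1)+(1)*s), (1)*s, (0); (0), (0), (1); (-1)*s, ((1)+(-1)*s), (0)]) * (!![1,0,0; 0, s, 1+s; 0, 1-s, -s]) = (!![((1)+(1)*s), (0), (1)*s; (0), ((1)+(-1)*s), (-1)*s; (-1)*s, (1)*s, (1)] : Matrix (Fin 3) (Fin 3) R) := by
    ext i j <;> fin_cases i <;> fin_cases j <;> simp [Matrix.mul_apply, Fin.sum_univ_succ, Matrix.vecHead, Matrix.vecTail] <;> (try ring_nf) <;> (try simp [hs2]) <;> (try ring_nf)
  have h4 : (!![((1)+(1)*s), (0), (1)*s; (0), ((1)+(-1)*s), (-1)*s; (-1)*s, (1)*s, (1)]) * (!![1,0,0; 0,0,1; 0,1,0]) = (!![((1)+(1)*s), (1)*s, (0); (0), (-1)*s, ((1)+(-1)*s); (-1)*s, (1), (1)*s] : Matrix (Fin 3) (Fin 3) R) := by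
    ext i j <;> fin_cases i <;> fin_cases j <;> simp [Matrix.mul_apply, Fin.sum_univ_succ, Matrix.vecHead, Matrix.vecTail] <;> (try ring_nf) <;> (try simp [hs2]) <;> (try ring_nf)
  have h5 : (!![((1)+(1)*s), (1)*s, (0); (0), (-1)*s, ((1)+(-1)*s); (-1)*s, (1), (1)*s]) * (!![0,1,0; 1,0,0; 0,0,1]) = (!![(1)*s, ((1)+(1)*s), (0); (-1)*s, (0), ((1)+(-1)*s); (1), (-1)*s, (1)*s] : Matrix (Fin 3) (Fin 3) R) := by
    ext i j <;> fin_cases i <;> fin_cases j <;> simp [Matrix.mul_apply, Fin.sum_univ_succ, Matrix.vecHead, Matrix.vecTail] <;> (try ring_nf) <;> (try simp [hs2]) <;> (try ring_nf)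
  have h6 : (!![(1)*s, ((1)+(1)*s), (0); (-1)*s, (0), ((1)+(-1)*s); (1), (-1)*s, (1)*s]) * (!![s, 1+s, 0; 1-s, -s, 0; 0,0,1]) = (!![(1), (0), (0); (0), (-1)*s, ((1)+(-1)*s); (0), ((1)+(1)*s), (1)*s] : Matrix (Fin 3) (Fin 3) R) := by
    ext i j <;> fin_cases i <;> fin_cases j <;> simp [Matrix.mul_apply, Fin.sum_univ_succ, Matrix.vecHead, Matrix.vecTail] <;> (try ring_nf) <;> (try simp [hs2]) <;> (try ring_nf)
  have h7 : (!![(1), (0), (0); (0), (-1)*s, ((1)+(-1)*s); (0), ((1)+(1)*s), (1)*s]) * (!![1,0,0; 0,0,1; 0,1,0]) = (!![(1), (0), (0); (0), ((1)+(-1)*s), (-1)*s; (0), (1)*s, ((1)+(1)*s)] : Matrix (Fin 3) (Fin 3) R) := by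
    ext i j <;> fin_cases i <;> fin_cases j <;> simp [Matrix.mul_apply, Fin.sum_univ_succ, Matrix.vecHead, Matrix.vecTail] <;> (try ring_nf) <;> (try simp [hs2]) <;> (try ring_nf)
  have h8 : (!![(1), (0), (0); (0), ((1)+(-1)*s), (-1)*s; (0), (1)*s, ((1)+(1)*s)]) * (!![1,0,0; 0, s, 1+s; 0, 1-s, -s]) = (!![(1), (0), (0); (0), (0), (1); (0), (1), (0)] : Matrix (Fin 3) (Fin 3) R) := by
    ext i j <;> fin_cases i <;> fin_cases j <;> simp [Matrix.mul_apply, Fin.sum_univ_succ, Matrix.vecHead, Matrix.vecTail] <;> (try ring_nf) <;> (try simp [hs2]) <;> (try ring_nf)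
  have h9 : (!![(1), (0), (0); (0), (0), (1); (0), (1), (0)]) * (!![1,0,0; 0,0,1; 0,1,0]) = (!![(1), (0), (0); (0), (1), (0); (0), (0), (1)] : Matrix (Fin 3) (Fin 3) R) := by
    ext i j <;> fin_cases i <;> fin_cases j <;> simp [Matrix.mul_apply, Fin.sum_univ_succ, Matrix.vecHead, Matrix.vecTail] <;> (try ring_nf) <;> (try simp [hs2]) <;> (try ring_nf)
  rw [h1, h2, h3, h4, h5, h6, h7, h8, h9]
  exact Matrix.one_fin_three.symm

open DualNumber in
theorem stmt_6 :
    let s : DualNumber ℤ := eps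
    let S1 : Matrix (Fin 3) (Fin 3) (DualNumber ℤ) := !![0,1,0; 1,0,0; 0,0,1]
    let S2 : Matrix (Fin 3) (Fin 3) (DualNumber ℤ) := !![1,0,0; 0,0,1; 0,1,0]
    let T1 : Matrix (Fin 3) (Fin 3) (DualNumber ℤ) := !![s, 1+s, 0; 1-s, -s, 0; 0,0,1]
    let T2 : Matrix (Fin 3) (Fin 3) (DualNumber ℤ) := !![1,0,0; 0, s, 1+s; 0, 1-s, -s]
    S2 * T1 * S1 * T2 * S2 * S1 * T1 * S2 * T2 * S2 = 1 := by
  intro s S1 S2 T1 T2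
  exact stmt_6_aux s eps_mul_eps S1 S2 T1 T2 rfl rfl rfl rfl
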